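/- arXiv:2203.15539 — 2 statements merged into one kernel-verified Lean document; each statement's English description precedes it below -/
import Mathlib

section
/- Let n ≥ 1, let A be an invertible n×n real matrix, and let τ ∈ ℝ. Then ∫₀^τ (τ − s) · exp((τ − 2s)A) ds = (2A)⁻¹ · ( τ · exp(τA) − (2A)⁻¹ · ( exp(τA) − exp(−τA) ) ), where exp denotes the matrix exponential and the integral is the entrywise (Bochner) integral of the matrix-valued function s ↦ (τ−s)·exp((τ−2s)A). -/
open NormedSpace

/-- **The correction-operator integral identity.** For an invertible `n×n` real matrix `A`
and `τ ∈ ℝ`,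
`∫₀^τ (τ − s)·exp((τ − 2s)A) ds = (2A)⁻¹·(τ·exp(τA) − (2A)⁻¹·(exp(τA) − exp(−τA)))`,
where the integral is taken entrywise. -/
theorem integral_exp_correction (n : ℕ) (hn : 1 ≤ n)
    (A : Matrix (Fin n) (Fin n) ℝ) (hA : IsUnit A) (τ : ℝ) :
    ∀ i j : Fin n,
      (∫ s in (0 : ℝ)..τ, ((τ - s) • exp ((τ - 2 * s) • A)) i j)
        = (((2 : ℝ) • A)⁻¹ *
            (τ • exp (τ • A)
              - ((2 : ℝ) • A)⁻¹ * (exp (τ • A) - exp ((-τ) • A)))) i j := by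
  intro i j
  letI : NormedRing (Matrix (Fin n) (Fin n) ℝ) := Matrix.linftyOpNormedRing
  letI : NormedAlgebra ℝ (Matrix (Fin n) (Fin n) ℝ) := Matrix.linftyOpNormedAlgebra
  haveI : CompleteSpace (Matrix (Fin n) (Fin n) ℝ) :=
    (by infer_instance : CompleteSpace (Fin n → Fin n → ℝ))
  set B := ((2 : ℝ) • A)⁻¹ with hBdef
  have hdet : IsUnit ((2 : ℝ) • A).det := by
    rw [Matrix.det_smul]
    exact (IsUnit.pow (Fintype.card (Fin n)) (isUnit_iff_ne_zero.2 two_ne_zero)).mul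
      ((Matrix.isUnit_iff_isUnit_det A).1 hA)
  have hBA : B * ((2 : ℝ) • A) = 1 := Matrix.nonsing_inv_mul _ hdet
  have hBA' : B * A = (2⁻¹ : ℝ) • (1 : Matrix (Fin n) (Fin n) ℝ) := by
    have h2 : (2 : ℝ) • (B * A) = (1 : Matrix (Fin n) (Fin n) ℝ) := by
      rw [← Matrix.mul_smul]; exact hBA
    calc B * A = (2⁻¹ : ℝ) • ((2 : ℝ) • (B * A)) := by rw [smul_smul]; norm_num
    _ = (2⁻¹ : ℝ) • (1 : Matrix (Fin n) (Fin n) ℝ) := by rw [h2]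
  -- derivative of exp((τ - 2s) • A)
  have hE : ∀ s : ℝ, HasDerivAt (fun u : ℝ => exp ((τ - 2 * u) • A))
      ((-2 : ℝ) • (exp ((τ - 2 * s) • A) * A)) s := by
    intro s
    have h1 : HasDerivAt (fun u : ℝ => τ - 2 * u) (-2) s := by
      simpa using ((hasDerivAt_id s).const_mul (2 : ℝ)).const_sub τ
    have hX := (hasDerivAt_exp_smul_const (𝕂 := ℝ) A (τ - 2 * s)).scomp s h1
    simp [Function.comp_def] at hX ⊢
    exact hX
  set G : ℝ → Matrix (Fin n) (Fin n) ℝ := fun s =>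
    B * B * exp ((τ - 2 * s) • A) - (τ - s) • (B * exp ((τ - 2 * s) • A)) with hGdef
  have hEA : ∀ s : ℝ, exp ((τ - 2 * s) • A) * A = A * exp ((τ - 2 * s) • A) := by
    intro s
    exact (((Commute.refl A).smul_right (τ - 2 * s)).exp_right).eq.symm
  have hG : ∀ s : ℝ, HasDerivAt G ((τ - s) • exp ((τ - 2 * s) • A)) s := by
    intro s
    have h1 : HasDerivAt (fun u : ℝ => B * B * exp ((τ - 2 * u) • A))
        ((-2 : ℝ) • (B * B * (exp ((τ - 2 * s) • A) * A))) s := by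
      have hX := (hE s).const_mul (B * B)
      simp [Matrix.mul_smul] at hX ⊢
      exact hX
    have h2 : HasDerivAt (fun u : ℝ => B * exp ((τ - 2 * u) • A))
        ((-2 : ℝ) • (B * (exp ((τ - 2 * s) • A) * A))) s := by
      have hX := (hE s).const_mul B
      simp [Matrix.mul_smul] at hX ⊢
      exact hX
    have h3 : HasDerivAt (fun u : ℝ => τ - u) (-1) s := by
      simpa using (hasDerivAt_id s).const_sub τ
    have h4 := h3.smul h2
    have h5 := h1.sub h4
    convert h5 using 1
    case e'_4 => rfl
    case e'_5 => rfl
    case e'_6 => rfl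
    case e'_8 => rfl
    set E := exp ((τ - 2 * s) • A) with hEdef
    rw [hEA s]
    have e2 : B * (A * E) = (2⁻¹ : ℝ) • E := by
      rw [← Matrix.mul_assoc, hBA', Matrix.smul_mul, Matrix.one_mul]
    have e1 : B * B * (A * E) = (2⁻¹ : ℝ) • (B * E) := by
      rw [Matrix.mul_assoc B B, e2, Matrix.mul_smul]
    rw [e1, e2]
    module
  -- the entry continuous linear map
  let ψ : Matrix (Fin n) (Fin n) ℝ →ₗ[ℝ] ℝ :=
    { toFun := fun M => M i j
      map_add' := fun _ _ => rfl
      map_smul' := fun _ _ => rfl }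
  let φ : Matrix (Fin n) (Fin n) ℝ →L[ℝ] ℝ := LinearMap.toContinuousLinearMap ψ
  have hderiv : ∀ t ∈ Set.uIcc (0 : ℝ) τ,
      HasDerivAt (fun s => φ (G s)) (φ ((τ - t) • exp ((τ - 2 * t) • A))) t :=
    fun t _ => φ.hasFDerivAt.comp_hasDerivAt t (hG t)
  have hcont : Continuous fun s : ℝ => φ ((τ - s) • exp ((τ - 2 * s) • A)) := by
    refine φ.continuous.comp ?_
    exact (continuous_const.sub continuous_id).smul
      (continuous_iff_continuousAt.2 fun s => (hE s).continuousAt)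
  have key := intervalIntegral.integral_eq_sub_of_hasDerivAt hderiv (hcont.intervalIntegrable 0 τ)
  have hfin : G τ - G 0 = B *
      (τ • exp (τ • A) - B * (exp (τ • A) - exp ((-τ) • A))) := by
    have hτ1 : τ - 2 * τ = -τ := by ring
    have hτ2 : τ - 2 * 0 = τ := by ring
    rw [hGdef]
    simp only [hτ1, hτ2, sub_self, zero_smul, sub_zero, sub_zero]
    simp only [Matrix.mul_sub, Matrix.mul_smul, ← Matrix.mul_assoc]
    abel
  calc (∫ s in (0 : ℝ)..τ, ((τ - s) • exp ((τ - 2 * s) • A)) i j)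
      = φ (G τ) - φ (G 0) := key
    _ = φ (G τ - G 0) := (map_sub φ _ _).symm
    _ = _ := by rw [hfin]; rfl
end

section
/- Let n ≥ 1, let A be an invertible n×n real matrix, and let τ ∈ ℝ. Define φ₂(B) = ∑_{k=0}^∞ B^k / (k+2)! for a square matrix B. Then (2A)⁻¹ · ( τ · exp(τA) − (2A)⁻¹ · ( exp(τA) − exp(−τA) ) ) = τ² · exp(τA) · φ₂(−2τA). -/
open NormedSpace

/-- The entire φ-function `φ₂(B) = ∑_{k≥0} B^k / (k+2)!` of a square real matrix. -/
noncomputable def phi2 {n : ℕ} (B : Matrix (Fin n) (Fin n) ℝ) : Matrix (Fin n) (Fin n) ℝ :=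
  ∑' k : ℕ, (((k + 2).factorial : ℝ))⁻¹ • B ^ k

section aux

variable {n : ℕ}

lemma phi2_summable (B : Matrix (Fin n) (Fin n) ℝ) :
    Summable fun k : ℕ => (((k + 2).factorial : ℝ))⁻¹ • B ^ k := by
  letI : SeminormedRing (Matrix (Fin n) (Fin n) ℝ) := Matrix.linftyOpSemiNormedRing
  letI : NormedRing (Matrix (Fin n) (Fin n) ℝ) := Matrix.linftyOpNormedRing
  letI : NormedAlgebra ℝ (Matrix (Fin n) (Fin n) ℝ) := Matrix.linftyOpNormedAlgebra
  refine Summable.of_norm_bounded (NormedSpace.norm_expSeries_summable' (𝕂 := ℝ) B) ?_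
  intro k
  rw [norm_smul, norm_smul]
  gcongr
  rw [norm_inv, norm_inv, Real.norm_natCast, Real.norm_natCast]
  have h1 : (0 : ℝ) < k.factorial := by positivity
  have h2 : (k.factorial : ℝ) ≤ ((k + 2).factorial : ℝ) := by
    exact_mod_cast Nat.factorial_le (by omega)
  exact inv_anti₀ h1 h2

lemma exp_eq_phi2 (B : Matrix (Fin n) (Fin n) ℝ) :
    exp B = 1 + B + B ^ 2 * phi2 B := by
  letI : SeminormedRing (Matrix (Fin n) (Fin n) ℝ) := Matrix.linftyOpSemiNormedRing
  letI : NormedRing (Matrix (Fin n) (Fin n) ℝ) := Matrix.linftyOpNormedRing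
  letI : NormedAlgebra ℝ (Matrix (Fin n) (Fin n) ℝ) := Matrix.linftyOpNormedAlgebra
  have hsum : Summable fun k : ℕ => ((k.factorial : ℝ))⁻¹ • B ^ k :=
    NormedSpace.expSeries_summable' (𝕂 := ℝ) B
  rw [NormedSpace.exp_eq_tsum ℝ]
  beta_reduce
  rw [Summable.tsum_eq_zero_add hsum, Summable.tsum_eq_zero_add ((summable_nat_add_iff 1).2 hsum)]
  have : (∑' k : ℕ, ((k + 1 + 1).factorial : ℝ)⁻¹ • B ^ (k + 1 + 1))
      = B ^ 2 * phi2 B := by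
    rw [phi2, ← Summable.tsum_mul_left _ (phi2_summable B)]
    refine tsum_congr fun k => ?_
    rw [show k + 1 + 1 = k + 2 from by ring, mul_smul_comm]
    congr 1
    rw [← pow_add, add_comm]
  rw [this]
  simp [Nat.factorial]
  abel

end aux

/-- **Equivalence of the two formulations of the correction operator.** For an invertible
`n×n` real matrix `A` and `τ ∈ ℝ`,
`(2A)⁻¹·(τ·exp(τA) − (2A)⁻¹·(exp(τA) − exp(−τA))) = τ²·exp(τA)·φ₂(−2τA)`. -/
theorem correction_eq_phi2 (n : ℕ) (hn : 1 ≤ n)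
    (A : Matrix (Fin n) (Fin n) ℝ) (hA : IsUnit A) (τ : ℝ) :
    ((2 : ℝ) • A)⁻¹ *
        (τ • exp (τ • A) - ((2 : ℝ) • A)⁻¹ * (exp (τ • A) - exp ((-τ) • A)))
      = τ ^ 2 • (exp (τ • A) * phi2 ((-(2 * τ)) • A)) := by
  set C : Matrix (Fin n) (Fin n) ℝ := (2 : ℝ) • A with hC
  have hdet : IsUnit C.det := by
    rw [hC, Matrix.det_smul]
    exact ((isUnit_iff_ne_zero.2 (by positivity)).mul
      ((Matrix.isUnit_iff_isUnit_det A).1 hA))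
  have hCinv : C⁻¹ * C = 1 := Matrix.nonsing_inv_mul C hdet
  set E := exp (τ • A) with hE
  set F := exp ((-τ) • A) with hF
  set B : Matrix (Fin n) (Fin n) ℝ := (-(2 * τ)) • A with hB
  have hAE : A * E = E * A := by
    have : Commute A (τ • A) := (Commute.refl A).smul_right τ
    exact this.exp_right.eq
  have hEexpB : E * exp B = F := by
    rw [hE, hB, ← Matrix.exp_add_of_commute]
    · congr 1
      rw [← add_smul]; congr 1; ring
    · exact ((Commute.refl A).smul_right _).smul_left _
  have hB2 : B ^ 2 = (4 * τ ^ 2) • (A * A) := by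
    rw [hB, smul_pow, pow_two A]
    congr 1
    ring
  have hAAE : A * A * E = E * (A * A) := by
    rw [mul_assoc, hAE, ← mul_assoc, hAE, mul_assoc]
  have h1 : A * (A * (E * phi2 B)) = E * (A * A * phi2 B) := by
    rw [← mul_assoc, ← mul_assoc, hAAE, mul_assoc]
  have hsub : B ^ 2 * phi2 B = exp B - 1 - B := by rw [exp_eq_phi2 B]; abel
  have key : C * (C * (τ ^ 2 • (E * phi2 B))) = C * (τ • E) - (E - F) := by
    calc C * (C * (τ ^ 2 • (E * phi2 B)))
        = (4 * τ ^ 2) • (A * (A * (E * phi2 B))) := by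
          simp only [hC, smul_mul_assoc, mul_smul_comm, smul_smul]
          congr 1
          ring
      _ = E * (B ^ 2 * phi2 B) := by
          rw [hB2, smul_mul_assoc, mul_smul_comm, h1, mul_assoc]
      _ = F - E - (-(2 * τ)) • (E * A) := by
          rw [hsub, mul_sub, mul_sub, mul_one, hEexpB, hB, mul_smul_comm]
      _ = C * (τ • E) - (E - F) := by
          simp only [hC, smul_mul_assoc, mul_smul_comm, smul_smul, hAE, neg_smul]
          rw [show (2 : ℝ) * τ = τ * 2 by ring] at *
          abel
  have expand : τ • E - C⁻¹ * (E - F) = C⁻¹ * (C * (τ • E) - (E - F)) := by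
    rw [mul_sub C⁻¹ (C * (τ • E)) (E - F), ← mul_assoc, hCinv, one_mul]
  calc C⁻¹ * (τ • E - C⁻¹ * (E - F))
      = C⁻¹ * (C⁻¹ * (C * (C * (τ ^ 2 • (E * phi2 B))))) := by rw [expand, ← key]
    _ = τ ^ 2 • (E * phi2 B) := by
        rw [← mul_assoc C⁻¹ C, hCinv, one_mul, ← mul_assoc C⁻¹ C, hCinv, one_mul]
end
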